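/- Let λ ∈ ℂ be a nonzero algebraic number that is not a root of unity, let γ be a nonzero integer, and let P ∈ ℤ[x] be a polynomial that is irreducible in ℤ[x] and satisfies P(λ^γ) = 0. Then for every two-variable polynomial W ∈ ℤ[x,y], the following are equivalent: (a) W(λ^γ, λ^l) = 0 for infinitely many integers l; (b) P(x) divides W(x,y) in ℤ[x,y]. -/

import Mathlib

open Polynomial MvPolynomial

/-- The algebra isomorphism `ℤ[x,y] ≃ (ℤ[x])[y]` sending `X 0` to `C X` and `X 1` to `X`. -/
noncomputable def myEquiv : MvPolynomial (Fin 2) ℤ ≃ₐ[ℤ] Polynomial (Polynomial ℤ) :=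
  (MvPolynomial.renameEquiv ℤ (Equiv.swap (0 : Fin 2) 1)).trans
    ((MvPolynomial.finSuccEquiv ℤ 1).trans
      (Polynomial.mapAlgEquiv
        ((MvPolynomial.renameEquiv ℤ (Equiv.equivPUnit.{1, 1} (Fin 1))).trans
          (MvPolynomial.pUnitAlgEquiv ℤ))))

lemma myEquiv_X0 : myEquiv (MvPolynomial.X 0) = Polynomial.C Polynomial.X := by
  simp [myEquiv, Polynomial.mapAlgEquiv]
  rw [show ((1 : Fin 2)) = Fin.succ 0 from rfl, MvPolynomial.finSuccEquiv_X_succ]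
  simp

lemma myEquiv_X1 : myEquiv (MvPolynomial.X 1) = Polynomial.X := by
  simp [myEquiv, Polynomial.mapAlgEquiv, MvPolynomial.finSuccEquiv_X_zero]

/-- Let `λ ∈ ℂ` be nonzero and not a root of unity, `γ` a nonzero integer, and `P ∈ ℤ[x]`
irreducible with `P (λ^γ) = 0`.  Then a two-variable integer polynomial `W` vanishes at
`(λ^γ, λ^t)` for infinitely many integers `t` if and only if `P (x)` divides `W (x, y)` in
`ℤ[x, y]`. -/
theorem infinite_vanishing_iff_dvd
    (l : ℂ) (hl : l ≠ 0) (hroot : ∀ n : ℕ, 1 ≤ n → l ^ n ≠ 1)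
    (γ : ℤ) (hγ : γ ≠ 0) (P : Polynomial ℤ) (hP : Irreducible P)
    (hPl : Polynomial.aeval (l ^ γ) P = 0) (W : MvPolynomial (Fin 2) ℤ) :
    {t : ℤ | MvPolynomial.aeval ![l ^ γ, l ^ t] W = 0}.Infinite ↔
      Polynomial.aeval (MvPolynomial.X 0 : MvPolynomial (Fin 2) ℤ) P ∣ W := by
  set α : ℂ := l ^ γ with hα
  -- injectivity of t ↦ l ^ t
  have hinj : Function.Injective fun t : ℤ => l ^ t := by
    intro a b hab
    by_contra hne
    have h1 : l ^ (a - b) = 1 := by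
      simp only at hab
      rw [zpow_sub₀ hl, hab, div_self (zpow_ne_zero _ hl)]
    have hn1 : 1 ≤ (a - b).natAbs := by
      have : a - b ≠ 0 := sub_ne_zero.mpr hne
      omega
    have h2 : l ^ (a - b).natAbs = 1 := by
      rcases Int.natAbs_eq (a - b) with h | h
      · rw [← zpow_natCast, ← h, h1]
      · have : l ^ (-((a - b).natAbs : ℤ)) = 1 := by rw [← h, h1]
        rw [zpow_neg, zpow_natCast, inv_eq_one] at this
        exact this
    exact hroot _ hn1 h2
  -- P is nonconstant
  have hP0 : P ≠ 0 := hP.ne_zero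
  have hPconst : P.natDegree ≠ 0 := by
    intro h
    apply hP0
    have hc : P = Polynomial.C (P.coeff 0) := Polynomial.eq_C_of_natDegree_eq_zero h
    have h1 : ((P.coeff 0 : ℤ) : ℂ) = 0 := by
      have h2 := hPl; rw [hc] at h2; simpa using h2
    have h0 : P.coeff 0 = 0 := by exact_mod_cast h1
    rw [hc, h0, map_zero]
  -- P is primitive
  have hprim : P.IsPrimitive := by
    rw [Polynomial.isPrimitive_iff_isUnit_of_C_dvd]
    intro r hr
    obtain ⟨q, hq⟩ := hr
    rcases hP.isUnit_or_isUnit hq with h | h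
    · exact Polynomial.isUnit_C.mp h
    · exfalso
      obtain ⟨u, hu, hq'⟩ := Polynomial.isUnit_iff.mp h
      apply hPconst
      rw [hq, ← hq', ← Polynomial.C_mul, Polynomial.natDegree_C]
  -- key divisibility lemma over ℤ[x]
  have hint : IsIntegral ℚ α := by
    rw [← isAlgebraic_iff_isIntegral]
    refine ⟨P.map (algebraMap ℤ ℚ), ?_, ?_⟩
    · exact (Polynomial.map_ne_zero_iff (algebraMap ℤ ℚ).injective_int).mpr hP0
    · rw [Polynomial.aeval_map_algebraMap]; exact hPl
  have hPQirr : Irreducible (P.map (Int.castRingHom ℚ)) :=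
    (Polynomial.IsPrimitive.Int.irreducible_iff_irreducible_map_cast hprim).mp hP
  have hmdvd : minpoly ℚ α ∣ P.map (Int.castRingHom ℚ) := by
    apply minpoly.dvd
    rw [show (Int.castRingHom ℚ) = algebraMap ℤ ℚ from rfl, Polynomial.aeval_map_algebraMap]
    exact hPl
  have hassoc : Associated (minpoly ℚ α) (P.map (Int.castRingHom ℚ)) :=
    (minpoly.irreducible hint).associated_of_dvd hPQirr hmdvd
  have hdvd : ∀ c : Polynomial ℤ, Polynomial.aeval α c = 0 → P ∣ c := by
    intro c hc
    rcases eq_or_ne c 0 with rfl | hc0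
    · exact dvd_zero P
    have hcontent : (c.content : ℂ) ≠ 0 := by
      exact_mod_cast fun h => hc0 (Polynomial.content_eq_zero_iff.mp (by exact_mod_cast h))
    have hpp : Polynomial.aeval α c.primPart = 0 := by
      have h2 := hc
      rw [Polynomial.eq_C_content_mul_primPart c] at h2
      simp only [map_mul, Polynomial.aeval_C, algebraMap_int_eq, eq_intCast] at h2
      rcases mul_eq_zero.mp h2 with h | h
      · exact absurd (by simpa using h) hcontent
      · exact h
    refine dvd_trans ?_ c.primPart_dvd
    rw [Polynomial.IsPrimitive.Int.dvd_iff_map_cast_dvd_map_cast P c.primPart hprim]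
    refine dvd_trans hassoc.symm.dvd (minpoly.dvd ℚ α ?_)
    rw [show (Int.castRingHom ℚ) = algebraMap ℤ ℚ from rfl, Polynomial.aeval_map_algebraMap]
    exact hpp
  -- the image of `aeval (X 0) P` under `myEquiv`
  have hEP : myEquiv (Polynomial.aeval (MvPolynomial.X 0) P) = Polynomial.C P := by
    have h1 := Polynomial.aeval_algHom_apply myEquiv.toAlgHom (MvPolynomial.X 0) P
    simp only [AlgEquiv.toAlgHom_eq_coe, AlgHom.coe_coe, AlgEquiv.coe_toAlgHom, myEquiv_X0] at h1
    have h2 := Polynomial.aeval_algebraMap_apply (B := Polynomial (Polynomial ℤ))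
      (Polynomial.X : Polynomial ℤ) P
    rw [Polynomial.algebraMap_eq, Polynomial.aeval_X_left_apply] at h2
    rw [← h1, h2]
  -- evaluation compatibility
  have hcompat : ∀ t : ℤ, MvPolynomial.aeval ![l ^ γ, l ^ t] W =
      Polynomial.eval (l ^ t)
        ((myEquiv W).map ((Polynomial.aeval α : Polynomial ℤ →ₐ[ℤ] ℂ) : Polynomial ℤ →+* ℂ)) := by
    intro t
    let e3 : Polynomial (Polynomial ℤ) →ₐ[ℤ] Polynomial ℂ :=
      Polynomial.mapAlgHom (Polynomial.aeval α : Polynomial ℤ →ₐ[ℤ] ℂ)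
    let e4 : Polynomial ℂ →ₐ[ℤ] ℂ :=
      ((Polynomial.aeval (l ^ t) : Polynomial ℂ →ₐ[ℂ] ℂ)).restrictScalars ℤ
    have key : (e4.comp e3).comp myEquiv.toAlgHom
        = (MvPolynomial.aeval ![l ^ γ, l ^ t] : MvPolynomial (Fin 2) ℤ →ₐ[ℤ] ℂ) := by
      apply MvPolynomial.algHom_ext
      intro i
      fin_cases i
      · simp only [Fin.zero_eta, AlgHom.coe_comp, Function.comp_apply,
          AlgEquiv.toAlgHom_eq_coe, AlgHom.coe_coe, AlgEquiv.coe_toAlgHom, myEquiv_X0]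
        simp [e3, e4, hα]
      · simp only [Fin.mk_one, AlgHom.coe_comp, Function.comp_apply,
          AlgEquiv.toAlgHom_eq_coe, AlgHom.coe_coe, AlgEquiv.coe_toAlgHom, myEquiv_X1]
        simp [e3, e4]
    have h2 := congrArg (fun f => f W) key.symm
    simp only [AlgHom.coe_comp, Function.comp_apply, AlgEquiv.toAlgHom_eq_coe,
      AlgHom.coe_coe] at h2
    rw [h2]
    simp only [e3, e4, AlgHom.coe_restrictScalars', Polynomial.coe_mapAlgHom,
      Polynomial.coe_aeval_eq_eval, AlgEquiv.coe_toAlgHom]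
  constructor
  · -- infinite vanishing → divisibility
    intro hS
    set Q : Polynomial ℂ :=
      (myEquiv W).map ((Polynomial.aeval α : Polynomial ℤ →ₐ[ℤ] ℂ) : Polynomial ℤ →+* ℂ) with hQ
    have hQ0 : Q = 0 := by
      apply Polynomial.eq_zero_of_infinite_isRoot
      apply Set.Infinite.mono (s := (fun t : ℤ => l ^ t) ''
        {t : ℤ | MvPolynomial.aeval ![l ^ γ, l ^ t] W = 0})
      · rintro x ⟨t, ht, rfl⟩
        have := hcompat t
        rw [ht] at this
        exact this.symm
      · exact hS.image (Set.injOn_of_injective hinj)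
    have hcoeff : ∀ i, Polynomial.aeval α ((myEquiv W).coeff i) = 0 := by
      intro i
      have h3 := congrArg (fun p => Polynomial.coeff p i) hQ0
      simp only [hQ, Polynomial.coeff_map, Polynomial.coeff_zero] at h3
      simpa using h3
    have hCdvd : Polynomial.C P ∣ myEquiv W := by
      rw [Polynomial.C_dvd_iff_dvd_coeff]
      intro i
      exact hdvd _ (hcoeff i)
    have := map_dvd myEquiv.symm (hEP ▸ hCdvd)
    simpa using this
  · -- divisibility → vanishing everywhere
    rintro ⟨V, rfl⟩
    refine Set.infinite_of_injective_forall_mem (f := fun t : ℤ => t)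
      (fun a b h => h) (fun t => ?_)
    simp only [Set.mem_setOf_eq, map_mul]
    have hz : MvPolynomial.aeval ![α, l ^ t]
        (Polynomial.aeval (MvPolynomial.X 0 : MvPolynomial (Fin 2) ℤ) P) = 0 := by
      rw [← Polynomial.aeval_algHom_apply (MvPolynomial.aeval ![α, l ^ t])
        (MvPolynomial.X 0) P]
      simpa using hPl
    rw [hz, zero_mul]
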